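/- (Theorem 1, part 3.) Under the DSGCDMM dynamics and the existence of a saddle point, the dual residual of every head machine converges to zero: for every odd k ∈ {1,…,K}, s_k^l → 0 in ℝ^d as l → ∞, where s_1^{l+1} = ρ(ζ_2^{l+1} − ζ_2^l) and s_k^{l+1} = ρ(ζ_{k−1}^{l+1} − ζ_{k−1}^l) + ρ(ζ_{k+1}^{l+1} − ζ_{k+1}^l) for odd k with 1 < k < K. -/

import Mathlib

open Finset Filter
open scoped RealInnerProductSpace

noncomputable section
set_option maxHeartbeats 1600000

variable {E : Type*} [NormedAddCommGroup E] [InnerProductSpace ℝ E]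

lemma aux_shift_sum (n : ℕ) (f : ℕ → ℝ) :
    ∑ k ∈ range n, f k = (∑ k ∈ range n, f (k+1)) + f 0 - f n := by
  have h1 := Finset.sum_range_succ f n
  have h2 := Finset.sum_range_succ' f n
  linarith

lemma aux_pair_sum (m : ℕ) (f : ℕ → ℝ) :
    ∑ k ∈ range (2*m), f k = ∑ i ∈ range m, (f (2*i) + f (2*i+1)) := by
  induction m with
  | zero => simp
  | succ m ih =>
    have h : 2*(m+1) = (2*m)+1+1 := by ring
    rw [h, Finset.sum_range_succ, Finset.sum_range_succ, ih, Finset.sum_range_succ]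
    ring

lemma inner_diff_sq (u v s : E) :
    ⟪u - v, s - u⟫ = (1/2)*(‖v - s‖^2 - ‖u - s‖^2 - ‖u - v‖^2) := by
  have h := norm_sub_sq_real (u - s) (u - v)
  have h2 : (u - s) - (u - v) = v - s := by abel
  rw [h2] at h
  have h3 : ⟪u - v, s - u⟫ = -⟪u - s, u - v⟫ := by
    rw [show s - u = -(u - s) by abel, inner_neg_right, real_inner_comm]
  rw [h3]; linarith


lemma aux_Icc_range (N : ℕ) (f : ℕ → ℝ) :
    ∑ k ∈ Icc 1 N, f k = ∑ k ∈ range N, f (k+1) := by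
  induction N with
  | zero => simp
  | succ N ih =>
    rw [Finset.sum_range_succ, ← ih, Finset.sum_Icc_succ_top (by omega : 1 ≤ N+1)]

lemma lyap_tendsto (V : ℕ → ℝ) (D : ℕ → E) (c : ℝ) (hc : 0 < c)
    (hV : ∀ t, 0 ≤ V t)
    (hstep : ∀ l : ℕ, V (l+2) + c * ‖D (l+1)‖^2 ≤ V (l+1)) :
    Tendsto D atTop (nhds 0) := by
  set W : ℕ → ℝ := fun t => V (t+1) with hW
  have hanti : Antitone W := by
    apply antitone_nat_of_succ_le
    intro t
    have h := hstep t
    have : 0 ≤ c * ‖D (t+1)‖^2 := by positivity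
    simp only [hW]
    have e : t + 1 + 1 = t + 2 := rfl
    rw [e]; linarith
  have hbdd : BddBelow (Set.range W) := by
    refine ⟨0, ?_⟩
    rintro x ⟨t, rfl⟩
    exact hV (t+1)
  have hlim : Tendsto W atTop (nhds (⨅ t, W t)) := tendsto_atTop_ciInf hanti hbdd
  have hlim2 : Tendsto (fun t => W (t+1)) atTop (nhds (⨅ t, W t)) :=
    hlim.comp (tendsto_add_atTop_nat 1)
  have hdiff : Tendsto (fun t => W t - W (t+1)) atTop (nhds 0) := by
    have := hlim.sub hlim2
    simpa using this
  have hsq : Tendsto (fun t => c * ‖D (t+1)‖^2) atTop (nhds 0) := by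
    apply squeeze_zero (fun t => by positivity) _ hdiff
    intro t
    have h := hstep t
    simp only [hW]
    have e : t + 1 + 1 = t + 2 := rfl
    rw [e]; linarith
  have hsq2 : Tendsto (fun t => ‖D (t+1)‖^2) atTop (nhds 0) := by
    have := hsq.const_mul c⁻¹
    simp only [← mul_assoc, inv_mul_cancel₀ (ne_of_gt hc), one_mul, mul_zero] at this
    exact this
  have hnorm : Tendsto (fun t => ‖D (t+1)‖) atTop (nhds 0) := by
    have := hsq2.sqrt
    simp only [Real.sqrt_zero] at this
    convert this using 2 with t
    rw [Real.sqrt_sq (norm_nonneg _)]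
  have hnorm2 : Tendsto (fun t => ‖D t‖) atTop (nhds 0) :=
    (tendsto_add_atTop_iff_nat 1).mp hnorm
  exact tendsto_zero_iff_norm_tendsto_zero.mpr hnorm2

lemma linearize (f : E → ℝ) (hf : ConvexOn ℝ Set.univ f)
    (x₀ : E) (μ ρ σL σR : ℝ) (C γL γR cL cR : E)
    (hmin : ∀ z : E, f x₀ + μ * ⟪C, x₀⟫ + (ρ/2) * ⟪C, x₀⟫^2 + ⟪γL, cL - x₀⟫ + ⟪γR, x₀ - cR⟫
        + σL * ((ρ/2) * ‖cL - x₀‖^2) + σR * ((ρ/2) * ‖x₀ - cR‖^2)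
      ≤ f z + μ * ⟪C, z⟫ + (ρ/2) * ⟪C, z⟫^2 + ⟪γL, cL - z⟫ + ⟪γR, z - cR⟫
        + σL * ((ρ/2) * ‖cL - z‖^2) + σR * ((ρ/2) * ‖z - cR‖^2)) :
    ∀ z : E, f x₀ ≤ f z +
      ⟪(μ + ρ * ⟪C, x₀⟫) • C - γL + γR + (σL*ρ) • (x₀ - cL) + (σR*ρ) • (x₀ - cR), z - x₀⟫ := by
  intro z
  set v : E := z - x₀ with hv
  set g : E := (μ + ρ * ⟪C, x₀⟫) • C - γL + γR + (σL*ρ) • (x₀ - cL) + (σR*ρ) • (x₀ - cR) with hg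
  set qv : ℝ := (ρ/2) * ⟪C, v⟫^2 + σL * ((ρ/2) * ‖v‖^2) + σR * ((ρ/2) * ‖v‖^2) with hqv
  have ginner : ⟪g, v⟫ = μ * ⟪C, v⟫ + ρ * ⟪C, x₀⟫ * ⟪C, v⟫ - ⟪γL, v⟫ + ⟪γR, v⟫
      + (σL*ρ) * ⟪x₀ - cL, v⟫ + (σR*ρ) * ⟪x₀ - cR, v⟫ := by
    simp [hg, inner_add_left, inner_sub_left, real_inner_smul_left]
    ring
  have key : ∀ t : ℝ, 0 < t → t ≤ 1 → f x₀ ≤ f z + ⟪g, v⟫ + t * qv := by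
    intro t ht ht1
    set zt : E := x₀ + t • v with hzt
    have hztc : zt = (1-t) • x₀ + t • z := by
      simp only [hzt, hv]; module
    have hconv : f zt ≤ (1-t) * f x₀ + t * f z := by
      rw [hztc]
      exact hf.2 (Set.mem_univ x₀) (Set.mem_univ z) (by linarith) (le_of_lt ht) (by ring)
    have e1 : ⟪C, zt⟫ = ⟪C, x₀⟫ + t * ⟪C, v⟫ := by
      simp [hzt, inner_add_right, real_inner_smul_right]
    have e2 : ⟪γL, cL - zt⟫ = ⟪γL, cL - x₀⟫ - t * ⟪γL, v⟫ := by
      rw [show cL - zt = (cL - x₀) - t • v by rw [hzt]; abel]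
      rw [inner_sub_right, real_inner_smul_right]
    have e3 : ⟪γR, zt - cR⟫ = ⟪γR, x₀ - cR⟫ + t * ⟪γR, v⟫ := by
      rw [show zt - cR = (x₀ - cR) + t • v by rw [hzt]; abel]
      rw [inner_add_right, real_inner_smul_right]
    have e4 : ‖cL - zt‖^2 = ‖cL - x₀‖^2 + 2*t*⟪x₀ - cL, v⟫ + t^2 * ‖v‖^2 := by
      rw [show cL - zt = (cL - x₀) - t • v by rw [hzt]; abel]
      rw [norm_sub_sq_real, real_inner_smul_right, norm_smul]
      have : ⟪cL - x₀, v⟫ = -⟪x₀ - cL, v⟫ := by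
        rw [show cL - x₀ = -(x₀ - cL) by abel, inner_neg_left]
      rw [this]
      simp [abs_of_pos ht]
      ring
    have e5 : ‖zt - cR‖^2 = ‖x₀ - cR‖^2 + 2*t*⟪x₀ - cR, v⟫ + t^2 * ‖v‖^2 := by
      rw [show zt - cR = (x₀ - cR) + t • v by rw [hzt]; abel]
      rw [norm_add_sq_real, real_inner_smul_right, norm_smul]
      simp [abs_of_pos ht]
      ring
    have h := hmin zt
    rw [e1, e2, e3, e4, e5] at h
    have hmain : t * f x₀ ≤ t * (f z + ⟪g, v⟫ + t * qv) := by
      rw [ginner, hqv]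
      nlinarith [h, hconv]
    have := (mul_le_mul_iff_right₀ ht).mp hmain
    linarith
  have hlim : Tendsto (fun n : ℕ => f z + ⟪g, v⟫ + (1/(n+1)) * qv) atTop
      (nhds (f z + ⟪g, v⟫)) := by
    have h0 : Tendsto (fun n : ℕ => (1/(n+1) : ℝ)) atTop (nhds 0) :=
      tendsto_one_div_add_atTop_nhds_zero_nat
    have h1 := (h0.mul_const qv).const_add (f z + ⟪g, v⟫)
    rw [zero_mul, add_zero] at h1
    exact h1
  have : f x₀ ≤ f z + ⟪g, v⟫ := by
    refine ge_of_tendsto' hlim ?_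
    intro n
    refine key (1/(n+1)) (by positivity) ?_
    rw [div_le_one (by positivity)]
    linarith [Nat.cast_nonneg (α := ℝ) n]
  exact this

lemma convexQ {d nn : ℕ} (c lam : ℝ) (hc : 0 ≤ c) (hlam : 0 ≤ lam)
    (y : EuclideanSpace ℝ (Fin nn))
    (T : EuclideanSpace ℝ (Fin d) →ₗ[ℝ] EuclideanSpace ℝ (Fin nn))
    (ω : Fin d → ℝ) (hω : ∀ j, 0 ≤ ω j) :
    ConvexOn ℝ Set.univ
      (fun x : EuclideanSpace ℝ (Fin d) => c * ‖y - T x‖^2 + lam * ∑ j, ω j * |x j|) := by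
  apply ConvexOn.add
  · refine ⟨convex_univ, ?_⟩
    intro x _ z _ a b ha hb hab
    simp only [smul_eq_mul]
    have hkey : y - T (a • x + b • z) = a • (y - T x) + b • (y - T z) := by
      rw [map_add, map_smul, map_smul]
      have hrhs : a • (y - T x) + b • (y - T z) = (a+b) • y - (a • T x + b • T z) := by
        module
      rw [hrhs, hab, one_smul]
    have h1 : ‖y - T (a • x + b • z)‖ ≤ a * ‖y - T x‖ + b * ‖y - T z‖ := by
      rw [hkey]
      refine le_trans (norm_add_le _ _) ?_
      rw [norm_smul, norm_smul, Real.norm_eq_abs, Real.norm_eq_abs,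
        abs_of_nonneg ha, abs_of_nonneg hb]
    have h2 : ‖y - T (a • x + b • z)‖^2 ≤ (a * ‖y - T x‖ + b * ‖y - T z‖)^2 := by
      apply pow_le_pow_left₀ (norm_nonneg _) h1
    have h3 : (a * ‖y - T x‖ + b * ‖y - T z‖)^2 ≤ a * ‖y - T x‖^2 + b * ‖y - T z‖^2 := by
      nlinarith [sq_nonneg (‖y - T x‖ - ‖y - T z‖), mul_nonneg ha hb]
    have := mul_le_mul_of_nonneg_left (le_trans h2 h3) hc
    linarith [this]
  · refine ⟨convex_univ, ?_⟩
    intro x _ z _ a b ha hb hab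
    simp only [smul_eq_mul]
    have hptw : ∀ j : Fin d, ω j * |(a • x + b • z) j| ≤ a * (ω j * |x j|) + b * (ω j * |z j|) := by
      intro j
      have he : (a • x + b • z) j = a * x j + b * z j := by
        simp [PiLp.add_apply, PiLp.smul_apply, smul_eq_mul]
      rw [he]
      have : |a * x j + b * z j| ≤ a * |x j| + b * |z j| := by
        refine le_trans (abs_add_le _ _) ?_
        rw [abs_mul, abs_mul, abs_of_nonneg ha, abs_of_nonneg hb]
      calc ω j * |a * x j + b * z j| ≤ ω j * (a * |x j| + b * |z j|) :=
            mul_le_mul_of_nonneg_left this (hω j)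
        _ = a * (ω j * |x j|) + b * (ω j * |z j|) := by ring
    have hsum : ∑ j, ω j * |(a • x + b • z) j| ≤
        ∑ j, (a * (ω j * |x j|) + b * (ω j * |z j|)) := Finset.sum_le_sum (fun j _ => hptw j)
    rw [Finset.sum_add_distrib, ← Finset.mul_sum, ← Finset.mul_sum] at hsum
    have := mul_le_mul_of_nonneg_left hsum hlam
    linarith [this]

lemma master_step
    (m : ℕ) (hm : 1 ≤ m) (ρ : ℝ) (hρ : 0 < ρ)
    (C ζs : E) (hCζs : ⟪C, ζs⟫ = 0)
    (Qa Qs Mn Mo Ms : ℕ → ℝ) (a b Gn Go Gs Dz : ℕ → E)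
    (hGn0 : Gn 0 = 0) (hGnM : Gn (2*m) = 0) (hGoM : Go (2*m) = 0) (hGsM : Gs (2*m) = 0)
    (hDz0 : Dz 0 = 0)
    (hDzj : ∀ i ∈ range m, Dz (2*i+2) = a (2*i+2) - b (2*i+2))
    (hMrel : ∀ k ∈ Icc 1 (2*m), Mn k = Mo k + ρ * ⟪C, a k⟫)
    (hGrel : ∀ e ∈ Icc 1 (2*m-1), Gn e = Go e + ρ • (a e - a (e+1)))
    (hlin_odd : ∀ i ∈ range m,
      Qa (2*i+1) ≤ Qs (2*i+1) + ⟪Mn (2*i+1) • C - Gn (2*i) + Gn (2*i+1)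
        + ρ • Dz (2*i) + ρ • Dz (2*i+2), ζs - a (2*i+1)⟫)
    (hlin_even : ∀ i ∈ range m,
      Qa (2*i+2) ≤ Qs (2*i+2) + ⟪Mn (2*i+2) • C - Gn (2*i+1) + Gn (2*i+2), ζs - a (2*i+2)⟫)
    (hcross : ∀ i ∈ range m,
      0 ≤ ⟪(Mn (2*i+2) - Mo (2*i+2)) • C - (Gn (2*i+1) - Go (2*i+1))
        + (Gn (2*i+2) - Go (2*i+2)), b (2*i+2) - a (2*i+2)⟫)
    (hsad : ∑ k ∈ range (2*m), Qs (k+1) ≤ ∑ k ∈ range (2*m), Qa (k+1)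
        + ∑ k ∈ range (2*m), Ms (k+1) * ⟪C, a (k+1)⟫
        + ∑ e ∈ range (2*m), ⟪Gs (e+1), a (e+1) - a (e+2)⟫) :
    ((1/(2*ρ)) * ∑ k ∈ range (2*m), (Mn (k+1) - Ms (k+1))^2
      + (1/(2*ρ)) * ∑ e ∈ range (2*m), ‖Gn (e+1) - Gs (e+1)‖^2
      + (ρ/2) * ∑ i ∈ range m, (if i+1 = m then (1:ℝ) else 2) * ‖a (2*i+2) - ζs‖^2
      + (ρ/2) * ∑ i ∈ range m, ⟪C, a (2*i+2)⟫^2)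
      + (ρ/2) * ∑ i ∈ range m, ‖a (2*i+2) - b (2*i+2)‖^2
    ≤ (1/(2*ρ)) * ∑ k ∈ range (2*m), (Mo (k+1) - Ms (k+1))^2
      + (1/(2*ρ)) * ∑ e ∈ range (2*m), ‖Go (e+1) - Gs (e+1)‖^2
      + (ρ/2) * ∑ i ∈ range m, (if i+1 = m then (1:ℝ) else 2) * ‖b (2*i+2) - ζs‖^2
      + (ρ/2) * ∑ i ∈ range m, ⟪C, b (2*i+2)⟫^2 := by
  -- Step A : per-i combined linearized inequality
  have hAB : ∀ i ∈ range m, Qa (2*i+1) + Qa (2*i+2) ≤ Qs (2*i+1) + Qs (2*i+2)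
      + ((-(Mn (2*i+1) * ⟪C, a (2*i+1)⟫) + -(Mn (2*i+2) * ⟪C, a (2*i+2)⟫))
        + (⟪Gn (2*i+1) - Gn (2*i), ζs - a (2*i+1)⟫ + ⟪Gn (2*i+2) - Gn (2*i+1), ζs - a (2*i+2)⟫)
        + (⟪ρ • Dz (2*i), ζs - a (2*i+1)⟫ + ⟪ρ • Dz (2*i+2), ζs - a (2*i+1)⟫)) := by
    intro i hi
    have h1 := hlin_odd i hi
    have h2 := hlin_even i hi
    simp only [inner_add_left, inner_sub_left, inner_sub_right, real_inner_smul_left,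
      hCζs] at h1 h2 ⊢
    linarith
  have hA : ∑ i ∈ range m, Qa (2*i+1) + ∑ i ∈ range m, Qa (2*i+2)
      ≤ ∑ i ∈ range m, Qs (2*i+1) + ∑ i ∈ range m, Qs (2*i+2)
        + (∑ i ∈ range m, -(Mn (2*i+1) * ⟪C, a (2*i+1)⟫)
           + ∑ i ∈ range m, -(Mn (2*i+2) * ⟪C, a (2*i+2)⟫))
        + (∑ i ∈ range m, ⟪Gn (2*i+1) - Gn (2*i), ζs - a (2*i+1)⟫
           + ∑ i ∈ range m, ⟪Gn (2*i+2) - Gn (2*i+1), ζs - a (2*i+2)⟫)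
        + (∑ i ∈ range m, ⟪ρ • Dz (2*i), ζs - a (2*i+1)⟫
           + ∑ i ∈ range m, ⟪ρ • Dz (2*i+2), ζs - a (2*i+1)⟫) := by
    have hsum := Finset.sum_le_sum hAB
    simp only [Finset.sum_add_distrib] at hsum
    linarith
  -- conversions between range (2m) sums and paired sums
  have cQa : ∑ k ∈ range (2*m), Qa (k+1)
      = ∑ i ∈ range m, Qa (2*i+1) + ∑ i ∈ range m, Qa (2*i+2) := by
    rw [aux_pair_sum m (fun k => Qa (k+1)), Finset.sum_add_distrib]
  have cQs : ∑ k ∈ range (2*m), Qs (k+1)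
      = ∑ i ∈ range m, Qs (2*i+1) + ∑ i ∈ range m, Qs (2*i+2) := by
    rw [aux_pair_sum m (fun k => Qs (k+1)), Finset.sum_add_distrib]
  have cMn : ∑ k ∈ range (2*m), -(Mn (k+1) * ⟪C, a (k+1)⟫)
      = ∑ i ∈ range m, -(Mn (2*i+1) * ⟪C, a (2*i+1)⟫)
        + ∑ i ∈ range m, -(Mn (2*i+2) * ⟪C, a (2*i+2)⟫) := by
    rw [aux_pair_sum m (fun k => -(Mn (k+1) * ⟪C, a (k+1)⟫)), Finset.sum_add_distrib]
  have cGn : ∑ k ∈ range (2*m), ⟪Gn (k+1) - Gn k, ζs - a (k+1)⟫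
      = ∑ i ∈ range m, ⟪Gn (2*i+1) - Gn (2*i), ζs - a (2*i+1)⟫
        + ∑ i ∈ range m, ⟪Gn (2*i+2) - Gn (2*i+1), ζs - a (2*i+2)⟫ := by
    rw [aux_pair_sum m (fun k => ⟪Gn (k+1) - Gn k, ζs - a (k+1)⟫), Finset.sum_add_distrib]
  -- Step B : telescoping
  have hB : ∑ k ∈ range (2*m), ⟪Gn (k+1) - Gn k, ζs - a (k+1)⟫
      = -(∑ e ∈ range (2*m), ⟪Gn (e+1), a (e+1) - a (e+2)⟫) := by
    have hs := aux_shift_sum (2*m) (fun k => ⟪Gn k, ζs - a (k+1)⟫)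
    simp only [hGn0, hGnM, inner_zero_left, add_zero, sub_zero] at hs
    have hexp : ∀ k, ⟪Gn (k+1) - Gn k, ζs - a (k+1)⟫
        = ⟪Gn (k+1), ζs - a (k+1)⟫ - ⟪Gn k, ζs - a (k+1)⟫ := fun k => inner_sub_left _ _ _
    rw [Finset.sum_congr rfl (fun k _ => hexp k), Finset.sum_sub_distrib, hs]
    rw [← Finset.sum_sub_distrib, ← Finset.sum_neg_distrib]
    refine Finset.sum_congr rfl (fun k _ => ?_)
    rw [← inner_sub_right, ← inner_neg_right]
    congr 1
    abel
  -- Step C1 : reindexing the Dz-terms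
  have hC1 : ∑ i ∈ range m, ⟪ρ • Dz (2*i), ζs - a (2*i+1)⟫
      = ∑ i ∈ range m, ⟪ρ • Dz (2*i+2), (if i+1 = m then (0:E) else ζs - a (2*i+3))⟫ := by
    obtain ⟨m', rfl⟩ : ∃ m', m = m' + 1 := ⟨m - 1, by omega⟩
    rw [Finset.sum_range_succ' (fun i => ⟪ρ • Dz (2*i), ζs - a (2*i+1)⟫) m',
      Finset.sum_range_succ
        (fun i => ⟪ρ • Dz (2*i+2), (if i+1 = m'+1 then (0:E) else ζs - a (2*i+3))⟫) m']
    have h0 : ⟪ρ • Dz (2*0), ζs - a (2*0+1)⟫ = 0 := by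
      have : (2*0 : ℕ) = 0 := rfl
      rw [this, hDz0, smul_zero, inner_zero_left]
    have hlast : ⟪ρ • Dz (2*m'+2), (if m'+1 = m'+1 then (0:E) else ζs - a (2*m'+3))⟫ = 0 := by
      rw [if_pos rfl, inner_zero_right]
    rw [h0, hlast, add_zero, add_zero]
    refine Finset.sum_congr rfl (fun i hi => ?_)
    have hne : ¬ (i+1 = m'+1) := by have := mem_range.mp hi; omega
    rw [if_neg hne]
    rfl
  -- Step C3 : per-i bound on the Dz-terms
  have hC3 : ∀ i ∈ range m,
      ⟪ρ • Dz (2*i+2), (if i+1 = m then (0:E) else ζs - a (2*i+3))⟫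
        + ⟪ρ • Dz (2*i+2), ζs - a (2*i+1)⟫
      ≤ (ρ/2) * ((if i+1 = m then (1:ℝ) else 2) * ‖b (2*i+2) - ζs‖^2)
        - (ρ/2) * ((if i+1 = m then (1:ℝ) else 2) * ‖a (2*i+2) - ζs‖^2)
        + (ρ/2) * ⟪C, b (2*i+2)⟫^2 - (ρ/2) * ⟪C, a (2*i+2)⟫^2
        - (ρ/2) * ((if i+1 = m then (1:ℝ) else 2) * ‖a (2*i+2) - b (2*i+2)‖^2) := by
    intro i hi
    have him := mem_range.mp hi
    rw [hDzj i hi]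
    have hcr := hcross i hi
    have hM := hMrel (2*i+2) (by simp only [Finset.mem_Icc]; omega)
    have hMd : Mn (2*i+2) - Mo (2*i+2) = ρ * ⟪C, a (2*i+2)⟫ := by rw [hM]; ring
    have hG1 := hGrel (2*i+1) (by simp only [Finset.mem_Icc]; omega)
    have hG1d : Gn (2*i+1) - Go (2*i+1) = ρ • (a (2*i+1) - a (2*i+2)) := by
      rw [hG1]; abel
    rw [hMd, hG1d] at hcr
    have hid1 : ⟪a (2*i+2) - b (2*i+2), ζs - a (2*i+2)⟫
        = (1/2)*(‖b (2*i+2) - ζs‖^2 - ‖a (2*i+2) - ζs‖^2 - ‖a (2*i+2) - b (2*i+2)‖^2) :=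
      inner_diff_sq _ _ _
    have hrel : ⟪a (2*i+2) - b (2*i+2), a (2*i+2) - a (2*i+1)⟫
        = ⟪a (2*i+1) - a (2*i+2), b (2*i+2) - a (2*i+2)⟫ := by
      rw [show a (2*i+2) - a (2*i+1) = -(a (2*i+1) - a (2*i+2)) by abel, inner_neg_right,
        show a (2*i+2) - b (2*i+2) = -(b (2*i+2) - a (2*i+2)) by abel, inner_neg_left,
        neg_neg, real_inner_comm]
    have hCb : ⟪C, b (2*i+2) - a (2*i+2)⟫ = ⟪C, b (2*i+2)⟫ - ⟪C, a (2*i+2)⟫ :=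
      inner_sub_right _ _ _
    by_cases hcase : i + 1 = m
    · have hzero : Gn (2*i+2) - Go (2*i+2) = 0 := by
        have h2m : 2*i+2 = 2*m := by omega
        rw [h2m, hGnM, hGoM, sub_zero]
      rw [hzero, add_zero, inner_sub_left, real_inner_smul_left, real_inner_smul_left,
        hCb] at hcr
      rw [if_pos hcase, if_pos hcase]
      rw [inner_zero_right, zero_add,
        show ζs - a (2*i+1) = (ζs - a (2*i+2)) + (a (2*i+2) - a (2*i+1)) by abel,
        inner_add_right]
      simp only [real_inner_smul_left]
      rw [hid1, hrel]
      nlinarith [hcr, mul_nonneg hρ.le (sq_nonneg (⟪C, a (2*i+2)⟫ - ⟪C, b (2*i+2)⟫))]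
    · have hG2 := hGrel (2*i+2) (by simp only [Finset.mem_Icc]; omega)
      have hG2d : Gn (2*i+2) - Go (2*i+2) = ρ • (a (2*i+2) - a (2*i+3)) := by
        rw [hG2]; abel
      rw [hG2d] at hcr
      rw [inner_add_left, inner_sub_left, real_inner_smul_left, real_inner_smul_left,
        real_inner_smul_left, hCb] at hcr
      have hrel2 : ⟪a (2*i+2) - b (2*i+2), a (2*i+2) - a (2*i+3)⟫
          = -⟪a (2*i+2) - a (2*i+3), b (2*i+2) - a (2*i+2)⟫ := by
        rw [show a (2*i+2) - b (2*i+2) = -(b (2*i+2) - a (2*i+2)) by abel, inner_neg_left,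
          real_inner_comm]
      rw [if_neg hcase, if_neg hcase]
      rw [show ζs - a (2*i+3) = (ζs - a (2*i+2)) + (a (2*i+2) - a (2*i+3)) by abel,
        show ζs - a (2*i+1) = (ζs - a (2*i+2)) + (a (2*i+2) - a (2*i+1)) by abel,
        inner_add_right, inner_add_right]
      simp only [real_inner_smul_left]
      rw [hid1, hrel, hrel2]
      nlinarith [hcr, mul_nonneg hρ.le (sq_nonneg (⟪C, a (2*i+2)⟫ - ⟪C, b (2*i+2)⟫))]
  -- Step D : dual decrease bounds
  have hD1 : ∀ k ∈ range (2*m), Ms (k+1) * ⟪C, a (k+1)⟫ + -(Mn (k+1) * ⟪C, a (k+1)⟫)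
      ≤ 1/(2*ρ) * ((Mo (k+1) - Ms (k+1))^2 - (Mn (k+1) - Ms (k+1))^2) := by
    intro k hk
    have h := hMrel (k+1) (by simp only [Finset.mem_Icc]; have := mem_range.mp hk; omega)
    rw [show 1/(2*ρ) * ((Mo (k+1) - Ms (k+1))^2 - (Mn (k+1) - Ms (k+1))^2)
        = ((Mo (k+1) - Ms (k+1))^2 - (Mn (k+1) - Ms (k+1))^2)/(2*ρ) by ring,
      le_div_iff₀ (by positivity)]
    rw [h]
    nlinarith [sq_nonneg (ρ * ⟪C, a (k+1)⟫)]
  have hD2 : ∀ e ∈ range (2*m), ⟪Gs (e+1), a (e+1) - a (e+2)⟫ + -⟪Gn (e+1), a (e+1) - a (e+2)⟫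
      ≤ 1/(2*ρ) * (‖Go (e+1) - Gs (e+1)‖^2 - ‖Gn (e+1) - Gs (e+1)‖^2) := by
    intro e he
    by_cases hcase : e + 1 ≤ 2*m - 1
    · have h := hGrel (e+1) (by simp only [Finset.mem_Icc]; omega)
      have hexp : ‖Gn (e+1) - Gs (e+1)‖^2 = ‖Go (e+1) - Gs (e+1)‖^2
          + 2*(ρ*⟪Go (e+1) - Gs (e+1), a (e+1) - a (e+2)⟫)
          + ρ^2*‖a (e+1) - a (e+2)‖^2 := by
        rw [h, show Go (e+1) + ρ • (a (e+1) - a (e+2)) - Gs (e+1)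
            = (Go (e+1) - Gs (e+1)) + ρ • (a (e+1) - a (e+2)) by abel,
          norm_add_sq_real, real_inner_smul_right, norm_smul]
        simp only [Real.norm_eq_abs, mul_pow, sq_abs]
      have hlhs : ⟪Gs (e+1) - Gn (e+1), a (e+1) - a (e+2)⟫
          = ⟪Gs (e+1) - Go (e+1), a (e+1) - a (e+2)⟫ - ρ*‖a (e+1) - a (e+2)‖^2 := by
        rw [h, show Gs (e+1) - (Go (e+1) + ρ • (a (e+1) - a (e+2)))
            = (Gs (e+1) - Go (e+1)) - ρ • (a (e+1) - a (e+2)) by abel,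
          inner_sub_left, real_inner_smul_left, real_inner_self_eq_norm_sq]
      have hneg : ⟪Go (e+1) - Gs (e+1), a (e+1) - a (e+2)⟫
          = -⟪Gs (e+1) - Go (e+1), a (e+1) - a (e+2)⟫ := by
        rw [show Go (e+1) - Gs (e+1) = -(Gs (e+1) - Go (e+1)) by abel, inner_neg_left]
      have hsplit : ⟪Gs (e+1) - Gn (e+1), a (e+1) - a (e+2)⟫
          = ⟪Gs (e+1), a (e+1) - a (e+2)⟫ - ⟪Gn (e+1), a (e+1) - a (e+2)⟫ :=
        inner_sub_left _ _ _
      rw [show 1/(2*ρ) * (‖Go (e+1) - Gs (e+1)‖^2 - ‖Gn (e+1) - Gs (e+1)‖^2)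
          = (‖Go (e+1) - Gs (e+1)‖^2 - ‖Gn (e+1) - Gs (e+1)‖^2)/(2*ρ) by ring,
        le_div_iff₀ (by positivity)]
      nlinarith [hexp, hlhs, hneg, hsplit,
        mul_nonneg (mul_nonneg hρ.le hρ.le) (sq_nonneg ‖a (e+1) - a (e+2)‖)]
    · have he2m : e + 1 = 2*m := by have := mem_range.mp he; omega
      rw [he2m, hGnM, hGoM, hGsM]
      simp
  -- Step E : assembly
  have hsum1 : ∑ k ∈ range (2*m), (Ms (k+1) * ⟪C, a (k+1)⟫ + -(Mn (k+1) * ⟪C, a (k+1)⟫))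
      ≤ 1/(2*ρ) * ∑ k ∈ range (2*m), (Mo (k+1) - Ms (k+1))^2
        - 1/(2*ρ) * ∑ k ∈ range (2*m), (Mn (k+1) - Ms (k+1))^2 := by
    calc ∑ k ∈ range (2*m), (Ms (k+1) * ⟪C, a (k+1)⟫ + -(Mn (k+1) * ⟪C, a (k+1)⟫))
        ≤ ∑ k ∈ range (2*m), 1/(2*ρ) * ((Mo (k+1) - Ms (k+1))^2 - (Mn (k+1) - Ms (k+1))^2) :=
          Finset.sum_le_sum hD1
      _ = _ := by
          rw [← Finset.mul_sum, Finset.sum_sub_distrib, mul_sub]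
  have hsum2 : ∑ e ∈ range (2*m), (⟪Gs (e+1), a (e+1) - a (e+2)⟫
        + -⟪Gn (e+1), a (e+1) - a (e+2)⟫)
      ≤ 1/(2*ρ) * ∑ e ∈ range (2*m), ‖Go (e+1) - Gs (e+1)‖^2
        - 1/(2*ρ) * ∑ e ∈ range (2*m), ‖Gn (e+1) - Gs (e+1)‖^2 := by
    calc ∑ e ∈ range (2*m), (⟪Gs (e+1), a (e+1) - a (e+2)⟫ + -⟪Gn (e+1), a (e+1) - a (e+2)⟫)
        ≤ ∑ e ∈ range (2*m), 1/(2*ρ) * (‖Go (e+1) - Gs (e+1)‖^2 - ‖Gn (e+1) - Gs (e+1)‖^2) :=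
          Finset.sum_le_sum hD2
      _ = _ := by
          rw [← Finset.mul_sum, Finset.sum_sub_distrib, mul_sub]
  have hT3 : ∑ i ∈ range m, ⟪ρ • Dz (2*i), ζs - a (2*i+1)⟫
        + ∑ i ∈ range m, ⟪ρ • Dz (2*i+2), ζs - a (2*i+1)⟫
      ≤ (ρ/2) * ∑ i ∈ range m, ((if i+1 = m then (1:ℝ) else 2) * ‖b (2*i+2) - ζs‖^2)
        - (ρ/2) * ∑ i ∈ range m, ((if i+1 = m then (1:ℝ) else 2) * ‖a (2*i+2) - ζs‖^2)
        + (ρ/2) * ∑ i ∈ range m, ⟪C, b (2*i+2)⟫^2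
        - (ρ/2) * ∑ i ∈ range m, ⟪C, a (2*i+2)⟫^2
        - (ρ/2) * ∑ i ∈ range m, ((if i+1 = m then (1:ℝ) else 2) * ‖a (2*i+2) - b (2*i+2)‖^2) := by
    rw [hC1, ← Finset.sum_add_distrib]
    calc ∑ i ∈ range m, (⟪ρ • Dz (2*i+2), (if i+1 = m then (0:E) else ζs - a (2*i+3))⟫
          + ⟪ρ • Dz (2*i+2), ζs - a (2*i+1)⟫)
        ≤ ∑ i ∈ range m, ((ρ/2) * ((if i+1 = m then (1:ℝ) else 2) * ‖b (2*i+2) - ζs‖^2)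
            - (ρ/2) * ((if i+1 = m then (1:ℝ) else 2) * ‖a (2*i+2) - ζs‖^2)
            + (ρ/2) * ⟪C, b (2*i+2)⟫^2 - (ρ/2) * ⟪C, a (2*i+2)⟫^2
            - (ρ/2) * ((if i+1 = m then (1:ℝ) else 2) * ‖a (2*i+2) - b (2*i+2)‖^2)) :=
          Finset.sum_le_sum hC3
      _ = _ := by
          simp only [Finset.sum_sub_distrib, Finset.sum_add_distrib, ← Finset.mul_sum]
  have hcfN : ∑ i ∈ range m, ‖a (2*i+2) - b (2*i+2)‖^2
      ≤ ∑ i ∈ range m, ((if i+1 = m then (1:ℝ) else 2) * ‖a (2*i+2) - b (2*i+2)‖^2) := by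
    refine Finset.sum_le_sum (fun i _ => ?_)
    by_cases hcase : i+1 = m
    · rw [if_pos hcase, one_mul]
    · rw [if_neg hcase]
      nlinarith [sq_nonneg ‖a (2*i+2) - b (2*i+2)‖]
  have hMsum : ∑ k ∈ range (2*m), Ms (k+1) * ⟪C, a (k+1)⟫
      + ∑ k ∈ range (2*m), -(Mn (k+1) * ⟪C, a (k+1)⟫)
      = ∑ k ∈ range (2*m), (Ms (k+1) * ⟪C, a (k+1)⟫ + -(Mn (k+1) * ⟪C, a (k+1)⟫)) := by
    rw [← Finset.sum_add_distrib]
  have hGsum : ∑ e ∈ range (2*m), ⟪Gs (e+1), a (e+1) - a (e+2)⟫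
      + -(∑ e ∈ range (2*m), ⟪Gn (e+1), a (e+1) - a (e+2)⟫)
      = ∑ e ∈ range (2*m), (⟪Gs (e+1), a (e+1) - a (e+2)⟫
          + -⟪Gn (e+1), a (e+1) - a (e+2)⟫) := by
    rw [← Finset.sum_neg_distrib, ← Finset.sum_add_distrib]
  have hmul := mul_le_mul_of_nonneg_left hcfN (by positivity : (0:ℝ) ≤ ρ/2)
  linarith [hA, hsad, hsum1, hsum2, hT3, hMsum, hGsum, hmul, cQa, cQs, cMn, cGn, hB]
/-- Theorem 1, part 3: the dual residual of every head machine converges to zero. -/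
theorem dsgcdmm_dual_residual_tendsto_zero
    (d K : ℕ) (hd : 1 ≤ d) (hK : 2 ≤ K) (hKeven : Even K)
    (n : ℕ → ℕ) (hn : ∀ k ∈ Icc 1 K, 1 ≤ n k)
    (y : ∀ k, EuclideanSpace ℝ (Fin (n k)))
    (P : ∀ k, Matrix (Fin (n k)) (Fin d) ℝ)
    (lam : ℝ) (hlam : 0 ≤ lam)
    (ω : ℕ → Fin d → ℝ) (hω : ∀ k ∈ Icc 1 K, ∀ j, 0 ≤ ω k j)
    (C : EuclideanSpace ℝ (Fin d))
    (Q : ℕ → EuclideanSpace ℝ (Fin d) → ℝ)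
    (hQ : ∀ k, ∀ x : EuclideanSpace ℝ (Fin d), Q k x =
      (1 / (2 * (n k : ℝ))) * ‖y k - (P k).toEuclideanLin x‖ ^ 2
        + lam * ∑ j, ω k j * |x j|)
    (ρ : ℝ) (hρ : 0 < ρ)
    (ζ : ℕ → ℕ → EuclideanSpace ℝ (Fin d))
    (μ : ℕ → ℕ → ℝ)
    (γ : ℕ → ℕ → EuclideanSpace ℝ (Fin d))
    (hdyn1 : ∀ l : ℕ, ∀ z : EuclideanSpace ℝ (Fin d),
      Q 1 (ζ (l+1) 1) + μ l 1 * ⟪C, ζ (l+1) 1⟫ + (ρ/2) * ⟪C, ζ (l+1) 1⟫ ^ 2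
          + ⟪γ l 1, ζ (l+1) 1 - ζ l 2⟫ + (ρ/2) * ‖ζ (l+1) 1 - ζ l 2‖ ^ 2
        ≤ Q 1 z + μ l 1 * ⟪C, z⟫ + (ρ/2) * ⟪C, z⟫ ^ 2
          + ⟪γ l 1, z - ζ l 2⟫ + (ρ/2) * ‖z - ζ l 2‖ ^ 2)
    (hdynodd : ∀ l : ℕ, ∀ k, Odd k → 1 < k → k < K → ∀ z : EuclideanSpace ℝ (Fin d),
      Q k (ζ (l+1) k) + μ l k * ⟪C, ζ (l+1) k⟫ + (ρ/2) * ⟪C, ζ (l+1) k⟫ ^ 2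
          + ⟪γ l (k-1), ζ l (k-1) - ζ (l+1) k⟫ + ⟪γ l k, ζ (l+1) k - ζ l (k+1)⟫
          + (ρ/2) * ‖ζ l (k-1) - ζ (l+1) k‖ ^ 2 + (ρ/2) * ‖ζ (l+1) k - ζ l (k+1)‖ ^ 2
        ≤ Q k z + μ l k * ⟪C, z⟫ + (ρ/2) * ⟪C, z⟫ ^ 2
          + ⟪γ l (k-1), ζ l (k-1) - z⟫ + ⟪γ l k, z - ζ l (k+1)⟫
          + (ρ/2) * ‖ζ l (k-1) - z‖ ^ 2 + (ρ/2) * ‖z - ζ l (k+1)‖ ^ 2)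
    (hdyneven : ∀ l : ℕ, ∀ k, Even k → 0 < k → k < K → ∀ z : EuclideanSpace ℝ (Fin d),
      Q k (ζ (l+1) k) + μ l k * ⟪C, ζ (l+1) k⟫ + (ρ/2) * ⟪C, ζ (l+1) k⟫ ^ 2
          + ⟪γ l (k-1), ζ (l+1) (k-1) - ζ (l+1) k⟫ + ⟪γ l k, ζ (l+1) k - ζ (l+1) (k+1)⟫
          + (ρ/2) * ‖ζ (l+1) (k-1) - ζ (l+1) k‖ ^ 2 + (ρ/2) * ‖ζ (l+1) k - ζ (l+1) (k+1)‖ ^ 2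
        ≤ Q k z + μ l k * ⟪C, z⟫ + (ρ/2) * ⟪C, z⟫ ^ 2
          + ⟪γ l (k-1), ζ (l+1) (k-1) - z⟫ + ⟪γ l k, z - ζ (l+1) (k+1)⟫
          + (ρ/2) * ‖ζ (l+1) (k-1) - z‖ ^ 2 + (ρ/2) * ‖z - ζ (l+1) (k+1)‖ ^ 2)
    (hdynK : ∀ l : ℕ, ∀ z : EuclideanSpace ℝ (Fin d),
      Q K (ζ (l+1) K) + μ l K * ⟪C, ζ (l+1) K⟫ + (ρ/2) * ⟪C, ζ (l+1) K⟫ ^ 2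
          + ⟪γ l (K-1), ζ (l+1) (K-1) - ζ (l+1) K⟫ + (ρ/2) * ‖ζ (l+1) (K-1) - ζ (l+1) K‖ ^ 2
        ≤ Q K z + μ l K * ⟪C, z⟫ + (ρ/2) * ⟪C, z⟫ ^ 2
          + ⟪γ l (K-1), ζ (l+1) (K-1) - z⟫ + (ρ/2) * ‖ζ (l+1) (K-1) - z‖ ^ 2)
    (hμ : ∀ l : ℕ, ∀ k ∈ Icc 1 K, μ (l+1) k = μ l k + ρ * ⟪C, ζ (l+1) k⟫)
    (hγ : ∀ l : ℕ, ∀ k ∈ Icc 1 (K-1),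
      γ (l+1) k = γ l k + ρ • (ζ (l+1) k - ζ (l+1) (k+1)))
    (ζs : EuclideanSpace ℝ (Fin d)) (μs : ℕ → ℝ) (γs : ℕ → EuclideanSpace ℝ (Fin d))
    (hCζs : ⟪C, ζs⟫ = 0)
    (hmin : ∀ z : EuclideanSpace ℝ (Fin d), ⟪C, z⟫ = 0 →
      ∑ k ∈ Icc 1 K, Q k ζs ≤ ∑ k ∈ Icc 1 K, Q k z)
    (hsaddle : ∀ zf : ℕ → EuclideanSpace ℝ (Fin d),
      (∑ k ∈ Icc 1 K, Q k ζs) + (∑ k ∈ Icc 1 K, μs k * ⟪C, ζs⟫)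
          + (∑ k ∈ Icc 1 (K-1), ⟪γs k, ζs - ζs⟫)
        ≤ (∑ k ∈ Icc 1 K, Q k (zf k)) + (∑ k ∈ Icc 1 K, μs k * ⟪C, zf k⟫)
          + (∑ k ∈ Icc 1 (K-1), ⟪γs k, zf k - zf (k+1)⟫))
    :
    ∀ k ∈ Icc 1 K, Odd k →
      Tendsto (fun l : ℕ =>
          if k = 1 then ρ • (ζ (l+1) 2 - ζ l 2)
          else ρ • (ζ (l+1) (k-1) - ζ l (k-1)) + ρ • (ζ (l+1) (k+1) - ζ l (k+1)))
        atTop (nhds (0 : EuclideanSpace ℝ (Fin d))) := by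
  -- Express K = 2*r
  obtain ⟨r, hr⟩ := hKeven
  have hK2m : K = 2*r := by omega
  subst hK2m
  have hm : 1 ≤ r := by omega
  clear hr hK
  -- convexity of Q
  have hconvQ : ∀ k, 1 ≤ k → k ≤ 2*r → ConvexOn ℝ Set.univ (Q k) := by
    intro k h1 h2
    have hfun : Q k = fun x => (1 / (2 * (n k : ℝ))) * ‖y k - (P k).toEuclideanLin x‖ ^ 2
        + lam * ∑ j, ω k j * |x j| := funext (hQ k)
    rw [hfun]
    exact convexQ _ lam (by positivity) hlam (y k) ((P k).toEuclideanLin) (ω k)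
      (hω k (Finset.mem_Icc.mpr ⟨h1, h2⟩))
  -- zero-extended dual variables
  set Gx : ℕ → ℕ → EuclideanSpace ℝ (Fin d) :=
    fun t e => if 1 ≤ e ∧ e ≤ 2*r - 1 then γ t e else 0 with hGxdef
  set Gsx : ℕ → EuclideanSpace ℝ (Fin d) :=
    fun e => if 1 ≤ e ∧ e ≤ 2*r - 1 then γs e else 0 with hGsxdef
  set Dzf : ℕ → ℕ → EuclideanSpace ℝ (Fin d) :=
    fun t j => if j = 0 then 0 else ζ (t+2) j - ζ (t+1) j with hDzfdef
  -- linearized optimality for odd machines (minimizer at time t+2)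
  have hgodd : ∀ t : ℕ, ∀ i ∈ range r, ∀ z : EuclideanSpace ℝ (Fin d),
      Q (2*i+1) (ζ (t+2) (2*i+1)) ≤ Q (2*i+1) z
        + ⟪μ (t+2) (2*i+1) • C - Gx (t+2) (2*i) + Gx (t+2) (2*i+1)
          + ρ • Dzf t (2*i) + ρ • Dzf t (2*i+2), z - ζ (t+2) (2*i+1)⟫ := by
    intro t i hi z
    have hir := mem_range.mp hi
    rcases Nat.eq_zero_or_pos i with hi0 | hipos
    · subst hi0
      have hlin := linearize (Q 1) (hconvQ 1 (by omega) (by omega)) (ζ (t+2) 1)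
        (μ (t+1) 1) ρ 0 1 C 0 (γ (t+1) 1) 0 (ζ (t+1) 2)
        (fun w => by
          have hh := hdyn1 (t+1) w
          simp only [show t+1+1 = t+2 from rfl] at hh
          simp only [inner_zero_left, zero_mul, one_mul, add_zero, zero_add]
          linarith) z
      have hvec : (μ (t+1) 1 + ρ * ⟪C, ζ (t+2) 1⟫) • C - 0 + γ (t+1) 1
          + (0*ρ) • (ζ (t+2) 1 - 0) + (1*ρ) • (ζ (t+2) 1 - ζ (t+1) 2)
          = μ (t+2) 1 • C - Gx (t+2) 0 + Gx (t+2) 1 + ρ • Dzf t 0 + ρ • Dzf t 2 := by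
        have e1 : μ (t+2) 1 = μ (t+1) 1 + ρ * ⟪C, ζ (t+2) 1⟫ :=
          hμ (t+1) 1 (Finset.mem_Icc.mpr (by omega))
        have e2 : Gx (t+2) 0 = 0 := by
          simp only [hGxdef]; rw [if_neg (by omega)]
        have e3 : Gx (t+2) 1 = γ (t+1) 1 + ρ • (ζ (t+2) 1 - ζ (t+2) 2) := by
          simp only [hGxdef]; rw [if_pos (by omega)]
          exact hγ (t+1) 1 (Finset.mem_Icc.mpr (by omega))
        have e4 : Dzf t 0 = 0 := by simp [hDzfdef]
        have e5 : Dzf t 2 = ζ (t+2) 2 - ζ (t+1) 2 := by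
          simp only [hDzfdef]; rw [if_neg (by omega)]
        rw [e1, e2, e3, e4, e5]
        module
      show Q 1 (ζ (t+2) 1) ≤ Q 1 z
        + ⟪μ (t+2) 1 • C - Gx (t+2) 0 + Gx (t+2) 1 + ρ • Dzf t 0 + ρ • Dzf t 2, z - ζ (t+2) 1⟫
      rw [← hvec]
      exact hlin
    · have hlin := linearize (Q (2*i+1)) (hconvQ (2*i+1) (by omega) (by omega)) (ζ (t+2) (2*i+1))
        (μ (t+1) (2*i+1)) ρ 1 1 C (γ (t+1) (2*i)) (γ (t+1) (2*i+1))
        (ζ (t+1) (2*i)) (ζ (t+1) (2*i+2))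
        (fun w => by
          have hh := hdynodd (t+1) (2*i+1) (Nat.odd_iff.mpr (by omega)) (by omega) (by omega) w
          simp only [show t+1+1 = t+2 from rfl, show 2*i+1-1 = 2*i from rfl,
            show 2*i+1+1 = 2*i+2 from rfl] at hh
          simp only [one_mul]
          linarith) z
      have hvec : (μ (t+1) (2*i+1) + ρ * ⟪C, ζ (t+2) (2*i+1)⟫) • C - γ (t+1) (2*i) + γ (t+1) (2*i+1)
          + (1*ρ) • (ζ (t+2) (2*i+1) - ζ (t+1) (2*i)) + (1*ρ) • (ζ (t+2) (2*i+1) - ζ (t+1) (2*i+2))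
          = μ (t+2) (2*i+1) • C - Gx (t+2) (2*i) + Gx (t+2) (2*i+1)
            + ρ • Dzf t (2*i) + ρ • Dzf t (2*i+2) := by
        have e1 : μ (t+2) (2*i+1) = μ (t+1) (2*i+1) + ρ * ⟪C, ζ (t+2) (2*i+1)⟫ :=
          hμ (t+1) (2*i+1) (Finset.mem_Icc.mpr (by omega))
        have e2 : Gx (t+2) (2*i) = γ (t+1) (2*i) + ρ • (ζ (t+2) (2*i) - ζ (t+2) (2*i+1)) := by
          simp only [hGxdef]; rw [if_pos (by omega)]
          exact hγ (t+1) (2*i) (Finset.mem_Icc.mpr (by omega))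
        have e3 : Gx (t+2) (2*i+1) = γ (t+1) (2*i+1) + ρ • (ζ (t+2) (2*i+1) - ζ (t+2) (2*i+2)) := by
          simp only [hGxdef]; rw [if_pos (by omega)]
          exact hγ (t+1) (2*i+1) (Finset.mem_Icc.mpr (by omega))
        have e4 : Dzf t (2*i) = ζ (t+2) (2*i) - ζ (t+1) (2*i) := by
          simp only [hDzfdef]; rw [if_neg (by omega)]
        have e5 : Dzf t (2*i+2) = ζ (t+2) (2*i+2) - ζ (t+1) (2*i+2) := by
          simp only [hDzfdef]; rw [if_neg (by omega)]
        rw [e1, e2, e3, e4, e5]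
        module
      rw [← hvec]
      exact hlin
  -- linearized optimality for even machines (minimizer at time t+1)
  have hgeven : ∀ t : ℕ, ∀ i ∈ range r, ∀ z : EuclideanSpace ℝ (Fin d),
      Q (2*i+2) (ζ (t+1) (2*i+2)) ≤ Q (2*i+2) z
        + ⟪μ (t+1) (2*i+2) • C - Gx (t+1) (2*i+1) + Gx (t+1) (2*i+2), z - ζ (t+1) (2*i+2)⟫ := by
    intro t i hi z
    have hir := mem_range.mp hi
    by_cases hcase : i + 1 = r
    · have h2a : 2*i+2 = 2*r := by omega
      have h2b : 2*i+1 = 2*r-1 := by omega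
      rw [h2a, h2b]
      have hlin := linearize (Q (2*r)) (hconvQ (2*r) (by omega) (by omega)) (ζ (t+1) (2*r))
        (μ t (2*r)) ρ 1 0 C (γ t (2*r-1)) 0 (ζ (t+1) (2*r-1)) 0
        (fun w => by
          have hh := hdynK t w
          simp only [inner_zero_left, zero_mul, one_mul, add_zero, zero_add]
          linarith) z
      have hvec : (μ t (2*r) + ρ * ⟪C, ζ (t+1) (2*r)⟫) • C - γ t (2*r-1) + 0
          + (1*ρ) • (ζ (t+1) (2*r) - ζ (t+1) (2*r-1)) + (0*ρ) • (ζ (t+1) (2*r) - 0)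
          = μ (t+1) (2*r) • C - Gx (t+1) (2*r-1) + Gx (t+1) (2*r) := by
        have e1 : μ (t+1) (2*r) = μ t (2*r) + ρ * ⟪C, ζ (t+1) (2*r)⟫ :=
          hμ t (2*r) (Finset.mem_Icc.mpr (by omega))
        have e2 : Gx (t+1) (2*r-1) = γ t (2*r-1) + ρ • (ζ (t+1) (2*r-1) - ζ (t+1) (2*r)) := by
          simp only [hGxdef]; rw [if_pos (by omega)]
          have h := hγ t (2*r-1) (Finset.mem_Icc.mpr (by omega))
          rw [show 2*r-1+1 = 2*r from by omega] at h
          exact h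
        have e3 : Gx (t+1) (2*r) = 0 := by
          simp only [hGxdef]; rw [if_neg (by omega)]
        rw [e1, e2, e3]
        module
      rw [← hvec]
      exact hlin
    · have hlin := linearize (Q (2*i+2)) (hconvQ (2*i+2) (by omega) (by omega)) (ζ (t+1) (2*i+2))
        (μ t (2*i+2)) ρ 1 1 C (γ t (2*i+1)) (γ t (2*i+2))
        (ζ (t+1) (2*i+1)) (ζ (t+1) (2*i+3))
        (fun w => by
          have hh := hdyneven t (2*i+2) (Nat.even_iff.mpr (by omega)) (by omega) (by omega) w
          simp only [show 2*i+2-1 = 2*i+1 from rfl, show 2*i+2+1 = 2*i+3 from rfl] at hh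
          simp only [one_mul]
          linarith) z
      have hvec : (μ t (2*i+2) + ρ * ⟪C, ζ (t+1) (2*i+2)⟫) • C - γ t (2*i+1) + γ t (2*i+2)
          + (1*ρ) • (ζ (t+1) (2*i+2) - ζ (t+1) (2*i+1)) + (1*ρ) • (ζ (t+1) (2*i+2) - ζ (t+1) (2*i+3))
          = μ (t+1) (2*i+2) • C - Gx (t+1) (2*i+1) + Gx (t+1) (2*i+2) := by
        have e1 : μ (t+1) (2*i+2) = μ t (2*i+2) + ρ * ⟪C, ζ (t+1) (2*i+2)⟫ :=
          hμ t (2*i+2) (Finset.mem_Icc.mpr (by omega))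
        have e2 : Gx (t+1) (2*i+1) = γ t (2*i+1) + ρ • (ζ (t+1) (2*i+1) - ζ (t+1) (2*i+2)) := by
          simp only [hGxdef]; rw [if_pos (by omega)]
          exact hγ t (2*i+1) (Finset.mem_Icc.mpr (by omega))
        have e3 : Gx (t+1) (2*i+2) = γ t (2*i+2) + ρ • (ζ (t+1) (2*i+2) - ζ (t+1) (2*i+3)) := by
          simp only [hGxdef]; rw [if_pos (by omega)]
          exact hγ t (2*i+2) (Finset.mem_Icc.mpr (by omega))
        rw [e1, e2, e3]
        module
      rw [← hvec]
      exact hlin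
  -- saddle inequality in range form
  have hsadl : ∀ l : ℕ, ∑ k ∈ range (2*r), Q (k+1) ζs
      ≤ ∑ k ∈ range (2*r), Q (k+1) (ζ (l+2) (k+1))
        + ∑ k ∈ range (2*r), μs (k+1) * ⟪C, ζ (l+2) (k+1)⟫
        + ∑ e ∈ range (2*r), ⟪Gsx (e+1), ζ (l+2) (e+1) - ζ (l+2) (e+2)⟫ := by
    intro l
    have h := hsaddle (fun k => ζ (l+2) k)
    simp only [hCζs, mul_zero, Finset.sum_const_zero, sub_self, inner_zero_right,
      add_zero] at h
    rw [aux_Icc_range, aux_Icc_range, aux_Icc_range, aux_Icc_range] at h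
    have hgs : ∑ e ∈ range (2*r), ⟪Gsx (e+1), ζ (l+2) (e+1) - ζ (l+2) (e+2)⟫
        = ∑ e ∈ range (2*r-1), ⟪γs (e+1), ζ (l+2) (e+1) - ζ (l+2) (e+1+1)⟫ := by
      obtain ⟨N, hN⟩ : ∃ N, 2*r = N + 1 := ⟨2*r-1, by omega⟩
      rw [hN, show N+1-1 = N from rfl, Finset.sum_range_succ]
      have hlast : Gsx (N+1) = 0 := by
        simp only [hGsxdef]; rw [if_neg (by omega)]
      rw [hlast, inner_zero_left, add_zero]
      refine Finset.sum_congr rfl (fun e he => ?_)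
      have := mem_range.mp he
      simp only [hGsxdef]
      rw [if_pos (by omega)]
    rw [hgs]
    exact h
  -- the Lyapunov function
  set V : ℕ → ℝ := fun t =>
    (1/(2*ρ)) * ∑ k ∈ range (2*r), (μ t (k+1) - μs (k+1))^2
    + (1/(2*ρ)) * ∑ e ∈ range (2*r), ‖Gx t (e+1) - Gsx (e+1)‖^2
    + (ρ/2) * ∑ i ∈ range r, (if i+1 = r then (1:ℝ) else 2) * ‖ζ t (2*i+2) - ζs‖^2
    + (ρ/2) * ∑ i ∈ range r, ⟪C, ζ t (2*i+2)⟫^2 with hVdef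
  have hV0 : ∀ t, 0 ≤ V t := by
    intro t
    simp only [hVdef]
    have h1 : (0:ℝ) ≤ ∑ k ∈ range (2*r), (μ t (k+1) - μs (k+1))^2 :=
      Finset.sum_nonneg (fun _ _ => sq_nonneg _)
    have h2 : (0:ℝ) ≤ ∑ e ∈ range (2*r), ‖Gx t (e+1) - Gsx (e+1)‖^2 :=
      Finset.sum_nonneg (fun _ _ => by positivity)
    have h3 : (0:ℝ) ≤ ∑ i ∈ range r, (if i+1 = r then (1:ℝ) else 2) * ‖ζ t (2*i+2) - ζs‖^2 :=
      Finset.sum_nonneg (fun i _ => mul_nonneg (by split <;> norm_num) (by positivity))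
    have h4 : (0:ℝ) ≤ ∑ i ∈ range r, ⟪C, ζ t (2*i+2)⟫^2 :=
      Finset.sum_nonneg (fun _ _ => sq_nonneg _)
    have c1 : (0:ℝ) ≤ 1/(2*ρ) := by positivity
    have c2 : (0:ℝ) ≤ ρ/2 := by positivity
    nlinarith [mul_nonneg c1 h1, mul_nonneg c1 h2, mul_nonneg c2 h3, mul_nonneg c2 h4]
  -- the master decrease inequality
  have masterl : ∀ l : ℕ, V (l+2)
      + (ρ/2) * ∑ i ∈ range r, ‖ζ (l+2) (2*i+2) - ζ (l+1) (2*i+2)‖^2 ≤ V (l+1) := by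
    intro l
    simp only [hVdef]
    refine master_step r hm ρ hρ C ζs hCζs (fun k => Q k (ζ (l+2) k)) (fun k => Q k ζs)
      (μ (l+2)) (μ (l+1)) μs (ζ (l+2)) (ζ (l+1)) (Gx (l+2)) (Gx (l+1)) Gsx (Dzf l)
      ?_ ?_ ?_ ?_ ?_ ?_ ?_ ?_ ?_ ?_ ?_ (hsadl l)
    · simp only [hGxdef]; rw [if_neg (by omega)]
    · simp only [hGxdef]; rw [if_neg (by omega)]
    · simp only [hGxdef]; rw [if_neg (by omega)]
    · simp only [hGsxdef]; rw [if_neg (by omega)]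
    · simp [hDzfdef]
    · intro i hi
      simp only [hDzfdef]
      rw [if_neg (by omega)]
    · exact fun k hk => hμ (l+1) k hk
    · intro e he
      rw [Finset.mem_Icc] at he
      simp only [hGxdef]
      rw [if_pos (by omega), if_pos (by omega)]
      exact hγ (l+1) e (Finset.mem_Icc.mpr (by omega))
    · exact fun i hi => hgodd l i hi ζs
    · exact fun i hi => hgeven (l+1) i hi ζs
    · -- cross inequality
      intro i hi
      have h1 : Q (2*i+2) (ζ (l+2) (2*i+2)) ≤ Q (2*i+2) (ζ (l+1) (2*i+2))
          + ⟪μ (l+2) (2*i+2) • C - Gx (l+2) (2*i+1) + Gx (l+2) (2*i+2),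
            ζ (l+1) (2*i+2) - ζ (l+2) (2*i+2)⟫ := hgeven (l+1) i hi (ζ (l+1) (2*i+2))
      have h2 : Q (2*i+2) (ζ (l+1) (2*i+2)) ≤ Q (2*i+2) (ζ (l+2) (2*i+2))
          + ⟪μ (l+1) (2*i+2) • C - Gx (l+1) (2*i+1) + Gx (l+1) (2*i+2),
            ζ (l+2) (2*i+2) - ζ (l+1) (2*i+2)⟫ := hgeven l i hi (ζ (l+2) (2*i+2))
      have hneg : ⟪μ (l+1) (2*i+2) • C - Gx (l+1) (2*i+1) + Gx (l+1) (2*i+2),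
            ζ (l+2) (2*i+2) - ζ (l+1) (2*i+2)⟫
          = -⟪μ (l+1) (2*i+2) • C - Gx (l+1) (2*i+1) + Gx (l+1) (2*i+2),
            ζ (l+1) (2*i+2) - ζ (l+2) (2*i+2)⟫ := by
        rw [show ζ (l+2) (2*i+2) - ζ (l+1) (2*i+2)
            = -(ζ (l+1) (2*i+2) - ζ (l+2) (2*i+2)) by abel, inner_neg_right]
      have hsub : ⟪(μ (l+2) (2*i+2) - μ (l+1) (2*i+2)) • C
            - (Gx (l+2) (2*i+1) - Gx (l+1) (2*i+1)) + (Gx (l+2) (2*i+2) - Gx (l+1) (2*i+2)),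
            ζ (l+1) (2*i+2) - ζ (l+2) (2*i+2)⟫
          = ⟪μ (l+2) (2*i+2) • C - Gx (l+2) (2*i+1) + Gx (l+2) (2*i+2),
              ζ (l+1) (2*i+2) - ζ (l+2) (2*i+2)⟫
            - ⟪μ (l+1) (2*i+2) • C - Gx (l+1) (2*i+1) + Gx (l+1) (2*i+2),
              ζ (l+1) (2*i+2) - ζ (l+2) (2*i+2)⟫ := by
        rw [← inner_sub_left]
        congr 1
        module
      linarith [h1, h2, hneg, hsub]
  -- convergence of the even-machine differences
  have evenconv : ∀ j, 2 ≤ j → j ≤ 2*r → Even j →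
      Tendsto (fun l : ℕ => ζ (l+1) j - ζ l j) atTop
        (nhds (0 : EuclideanSpace ℝ (Fin d))) := by
    intro j h2 hKj hev
    obtain ⟨c, hc⟩ := hev
    have hj : j = 2*(c-1)+2 := by omega
    have hcr : c - 1 < r := by omega
    rw [hj]
    have hstep : ∀ l : ℕ, V (l+2)
        + (ρ/2) * ‖ζ (l+2) (2*(c-1)+2) - ζ (l+1) (2*(c-1)+2)‖^2 ≤ V (l+1) := by
      intro l
      have hms := masterl l
      have hs : ‖ζ (l+2) (2*(c-1)+2) - ζ (l+1) (2*(c-1)+2)‖^2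
          ≤ ∑ i ∈ range r, ‖ζ (l+2) (2*i+2) - ζ (l+1) (2*i+2)‖^2 :=
        Finset.single_le_sum (f := fun i => ‖ζ (l+2) (2*i+2) - ζ (l+1) (2*i+2)‖^2)
          (fun i _ => sq_nonneg _) (mem_range.mpr hcr)
      have := mul_le_mul_of_nonneg_left hs (by positivity : (0:ℝ) ≤ ρ/2)
      linarith
    exact lyap_tendsto V (fun l => ζ (l+1) (2*(c-1)+2) - ζ l (2*(c-1)+2)) (ρ/2)
      (by positivity) hV0 hstep
  -- conclusion
  intro k hk hodd
  rw [Finset.mem_Icc] at hk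
  have hko := Nat.odd_iff.mp hodd
  by_cases hk1 : k = 1
  · subst hk1
    simp only [reduceIte]
    have h := evenconv 2 (by omega) (by omega) even_two
    have := h.const_smul ρ
    simpa using this
  · simp only [if_neg hk1]
    have h1 := evenconv (k-1) (by omega) (by omega) (Nat.even_iff.mpr (by omega))
    have h2 := evenconv (k+1) (by omega) (by omega) (Nat.even_iff.mpr (by omega))
    have := (h1.const_smul ρ).add (h2.const_smul ρ)
    simpa using this
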